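/- Consider the cyclic monomolecular mass-action network X_1 → X_2 → ... → X_n → X_1 with rate constants κ_1,...,κ_n, whose steady-state ideal is I_N = ⟨κ_n x_n - κ_1 x_1, κ_1 x_1 - κ_2 x_2, ..., κ_{n-1} x_{n-1} - κ_n x_n⟩ in Q(κ)[x_1,...,x_n]. Cut the cycle at complexes X_a and X_b with 1 ≤ a < b-1 ≤ n-1, giving subnetworks N_1 (the chain X_a → ... → X_b) and N_2 (the chain X_b → ... → X_n → X_1 → ... → X_a), with steady-state ideals I_{N_1} = ⟨κ_a x_a, ..., κ_{b-1} x_{b-1}⟩ and I_{N_2} = ⟨κ_1 x_1, ..., κ_{a-1} x_{a-1}, κ_b x_b, ..., κ_n x_n⟩. Let φ_i be the ring homomorphism sending variables and rate constants not belonging to N_i to 0. Then for n ≥ 4 and eliminating x_1, one has φ_i(I_N ∩ Q(κ)[x_2,...,x_n]) = I_{N_i} ∩ Q(κ)[x_2,...,x_n] for i = 1, 2. -/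

import Mathlib

open MvPolynomial

namespace CyclicCRN

variable {n : ℕ} [NeZero n]

/-- Variables: `Sum.inl i` is the rate constant `κ_{i+1}`, `Sum.inr i` is the species
concentration `x_{i+1}` (0-based indexing of the `n` species). -/
abbrev R (n : ℕ) := MvPolynomial (Fin n ⊕ Fin n) ℚ

noncomputable def κ (i : Fin n) : R n := X (Sum.inl i)
noncomputable def x (i : Fin n) : R n := X (Sum.inr i)

/-- Steady-state ideal of the cycle `X_1 → X_2 → ⋯ → X_n → X_1`:
generated by `κ_i x_i - κ_{i+1} x_{i+1}` (indices mod `n`). -/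
noncomputable def IN (n : ℕ) [NeZero n] : Ideal (R n) :=
  Ideal.span { p | ∃ i : Fin n, p = κ i * x i - κ (i + 1) * x (i + 1) }

/-- Steady-state ideal of the chain subnetwork `N_1 : X_a → ⋯ → X_b`
(0-based indices `a ≤ i < b`): the monomial ideal `⟨κ_a x_a, …, κ_{b-1} x_{b-1}⟩`. -/
noncomputable def IN1 (n a b : ℕ) : Ideal (R n) :=
  Ideal.span { p | ∃ i : Fin n, a ≤ (i : ℕ) ∧ (i : ℕ) < b ∧ p = κ i * x i }

/-- Steady-state ideal of the chain subnetwork `N_2 : X_b → ⋯ → X_n → X_1 → ⋯ → X_a`: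
the monomial ideal `⟨κ_1 x_1, …, κ_{a-1} x_{a-1}, κ_b x_b, …, κ_n x_n⟩`. -/
noncomputable def IN2 (n a b : ℕ) : Ideal (R n) :=
  Ideal.span { p | ∃ i : Fin n, ((i : ℕ) < a ∨ b ≤ (i : ℕ)) ∧ p = κ i * x i }

/-- Projection onto `N_1`: kills species outside `{X_a, …, X_b}` and rate constants of
reactions outside `N_1` (i.e. `κ_i` with `i ∉ [a, b-1]`). -/
noncomputable def φ1 (n a b : ℕ) : R n →ₐ[ℚ] R n :=
  aeval (fun v => match v with
    | Sum.inl i => if a ≤ (i : ℕ) ∧ (i : ℕ) < b then X (Sum.inl i) else 0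
    | Sum.inr i => if a ≤ (i : ℕ) ∧ (i : ℕ) ≤ b then X (Sum.inr i) else 0)

/-- Projection onto `N_2`: kills species outside `{X_b, …, X_n, X_1, …, X_a}` and rate
constants of reactions outside `N_2`. -/
noncomputable def φ2 (n a b : ℕ) : R n →ₐ[ℚ] R n :=
  aeval (fun v => match v with
    | Sum.inl i => if (i : ℕ) < a ∨ b ≤ (i : ℕ) then X (Sum.inl i) else 0
    | Sum.inr i => if (i : ℕ) ≤ a ∨ b ≤ (i : ℕ) then X (Sum.inr i) else 0)

/-- Polynomials not involving the species variable `x_1` (0-based index `0`). -/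
def Elim (n : ℕ) (hn : 0 < n) : Set (R n) :=
  { f | ∀ d ∈ f.support, d (Sum.inr ⟨0, hn⟩) = 0 }

/-! ### Auxiliary lemmas -/

set_option linter.unusedSectionVars false

lemma mem_elim_iff (hn : 0 < n) (f : R n) :
    f ∈ Elim n hn ↔ f ∈ supported ℚ {v : Fin n ⊕ Fin n | v ≠ Sum.inr ⟨0, hn⟩} := by
  rw [mem_supported]
  constructor
  · intro h v hv
    rcases (mem_vars v).mp hv with ⟨d, hd, hvd⟩
    intro he; subst he
    exact absurd (h d hd) (Finsupp.mem_support_iff.mp hvd)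
  · intro h d hd
    by_contra hne
    exact (h ((mem_vars _).mpr ⟨d, hd, Finsupp.mem_support_iff.mpr hne⟩)) rfl

lemma alghom_mem_supported {s : Set (Fin n ⊕ Fin n)} (φ : R n →ₐ[ℚ] R n)
    (hg : ∀ v ∈ s, φ (X v) ∈ supported ℚ s) {f : R n}
    (hf : f ∈ supported ℚ s) : φ f ∈ supported ℚ s := by
  have h1 : φ f ∈ (supported ℚ s).map φ := ⟨f, hf, rfl⟩
  have h2 : supported ℚ s = Algebra.adjoin ℚ (X '' s) := rfl
  rw [h2, AlgHom.map_adjoin] at h1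
  refine Algebra.adjoin_le ?_ h1
  rintro _ ⟨_, ⟨v, hv, rfl⟩, rfl⟩
  exact hg v hv

lemma φ1_κ (a b : ℕ) (i : Fin n) :
    φ1 n a b (κ i) = if a ≤ (i : ℕ) ∧ (i : ℕ) < b then κ i else 0 := by
  simp only [φ1, κ, aeval_X]

lemma φ1_x (a b : ℕ) (i : Fin n) :
    φ1 n a b (x i) = if a ≤ (i : ℕ) ∧ (i : ℕ) ≤ b then x i else 0 := by
  simp only [φ1, x, aeval_X]

lemma φ2_κ (a b : ℕ) (i : Fin n) :
    φ2 n a b (κ i) = if (i : ℕ) < a ∨ b ≤ (i : ℕ) then κ i else 0 := by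
  simp only [φ2, κ, aeval_X]

lemma φ2_x (a b : ℕ) (i : Fin n) :
    φ2 n a b (x i) = if (i : ℕ) ≤ a ∨ b ≤ (i : ℕ) then x i else 0 := by
  simp only [φ2, x, aeval_X]

lemma φ1_X_mem (hn : 0 < n) (a b : ℕ) (v : Fin n ⊕ Fin n)
    (hv : v ∈ {w : Fin n ⊕ Fin n | w ≠ Sum.inr ⟨0, hn⟩}) :
    φ1 n a b (X v) ∈ supported ℚ {w : Fin n ⊕ Fin n | w ≠ Sum.inr ⟨0, hn⟩} := by
  have h : φ1 n a b (X v) = X v ∨ φ1 n a b (X v) = 0 := by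
    cases v with
    | inl i =>
      have := φ1_κ (n := n) a b i
      rw [κ] at this
      rw [this]
      split <;> [exact Or.inl rfl; exact Or.inr rfl]
    | inr i =>
      have := φ1_x (n := n) a b i
      rw [x] at this
      rw [this]
      split <;> [exact Or.inl rfl; exact Or.inr rfl]
  rcases h with h | h <;> rw [h]
  · exact X_mem_supported.mpr hv
  · exact zero_mem _

lemma φ2_X_mem (hn : 0 < n) (a b : ℕ) (v : Fin n ⊕ Fin n)
    (hv : v ∈ {w : Fin n ⊕ Fin n | w ≠ Sum.inr ⟨0, hn⟩}) :
    φ2 n a b (X v) ∈ supported ℚ {w : Fin n ⊕ Fin n | w ≠ Sum.inr ⟨0, hn⟩} := by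
  have h : φ2 n a b (X v) = X v ∨ φ2 n a b (X v) = 0 := by
    cases v with
    | inl i =>
      have := φ2_κ (n := n) a b i
      rw [κ] at this
      rw [this]
      split <;> [exact Or.inl rfl; exact Or.inr rfl]
    | inr i =>
      have := φ2_x (n := n) a b i
      rw [x] at this
      rw [this]
      split <;> [exact Or.inl rfl; exact Or.inr rfl]
  rcases h with h | h <;> rw [h]
  · exact X_mem_supported.mpr hv
  · exact zero_mem _

open Fin.NatCast Fin.CommRing in
lemma chain_mem (i : Fin n) (k : ℕ) :
    κ i * x i - κ (i + (k : Fin n)) * x (i + (k : Fin n)) ∈ IN n := by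
  induction k with
  | zero => simp
  | succ k ih =>
    have hgen : κ (i + (k : Fin n)) * x (i + (k : Fin n))
        - κ (i + (k : Fin n) + 1) * x (i + (k : Fin n) + 1) ∈ IN n :=
      Ideal.subset_span ⟨i + (k : Fin n), rfl⟩
    have h2 := add_mem ih hgen
    have hcast : ((k + 1 : ℕ) : Fin n) = (k : Fin n) + 1 := by push_cast; ring
    rw [hcast, ← add_assoc]
    convert h2 using 1
    ring

open Fin.NatCast Fin.CommRing in
lemma pair_mem (i j : Fin n) : κ i * x i - κ j * x j ∈ IN n := by
  have h := chain_mem i ((j - i : Fin n) : ℕ)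
  rw [Fin.cast_val_eq_self] at h
  have hij : i + (j - i) = j := by ring
  rwa [hij] at h

lemma kx_eq_monomial (i : Fin n) :
    κ i * x i = monomial (Finsupp.single (Sum.inl i) 1 + Finsupp.single (Sum.inr i) 1) (1:ℚ) := by
  rw [monomial_single_add, pow_one, ← X_pow_eq_monomial, pow_one, κ, x]

lemma φ1_term_mem (a b : ℕ) (i : Fin n) : φ1 n a b (κ i * x i) ∈ IN1 n a b := by
  rw [map_mul, φ1_κ, φ1_x]
  by_cases h : a ≤ (i : ℕ) ∧ (i : ℕ) < b
  · rw [if_pos h, if_pos ⟨h.1, le_of_lt h.2⟩]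
    exact Ideal.subset_span ⟨i, h.1, h.2, rfl⟩
  · rw [if_neg h, zero_mul]; exact Ideal.zero_mem _

lemma φ2_term_mem (a b : ℕ) (i : Fin n) : φ2 n a b (κ i * x i) ∈ IN2 n a b := by
  rw [map_mul, φ2_κ, φ2_x]
  by_cases h : (i : ℕ) < a ∨ b ≤ (i : ℕ)
  · rw [if_pos h, if_pos (h.imp le_of_lt id)]
    exact Ideal.subset_span ⟨i, h, rfl⟩
  · rw [if_neg h, zero_mul]; exact Ideal.zero_mem _

lemma φ1_IN_le (a b : ℕ) : (IN n).map (φ1 n a b) ≤ IN1 n a b := by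
  rw [IN, Ideal.map_span, Ideal.span_le]
  rintro _ ⟨_, ⟨i, rfl⟩, rfl⟩
  rw [map_sub]
  exact sub_mem (φ1_term_mem a b i) (φ1_term_mem a b (i + 1))

lemma φ2_IN_le (a b : ℕ) : (IN n).map (φ2 n a b) ≤ IN2 n a b := by
  rw [IN, Ideal.map_span, Ideal.span_le]
  rintro _ ⟨_, ⟨i, rfl⟩, rfl⟩
  rw [map_sub]
  exact sub_mem (φ2_term_mem a b i) (φ2_term_mem a b (i + 1))

lemma span_kx_eq_monomial (P : Fin n → Prop) :
    Ideal.span {p : R n | ∃ i, P i ∧ p = κ i * x i}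
      = Ideal.span ((fun d => monomial d (1 : ℚ)) ''
          {d | ∃ i, P i ∧ d = Finsupp.single (Sum.inl i) 1 + Finsupp.single (Sum.inr i) 1}) := by
  congr 1
  ext p
  constructor
  · rintro ⟨i, hi, rfl⟩
    exact ⟨_, ⟨i, hi, rfl⟩, (kx_eq_monomial i).symm⟩
  · rintro ⟨_, ⟨i, hi, rfl⟩, rfl⟩
    exact ⟨i, hi, (kx_eq_monomial i).symm⟩

lemma mono_elim_le (hn : 0 < n) (P : Fin n → Prop) {f : R n}
    (hf : f ∈ Ideal.span {p : R n | ∃ i, P i ∧ p = κ i * x i}) (he : f ∈ Elim n hn) :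
    f ∈ Ideal.span {p : R n | ∃ i, (P i ∧ (i : ℕ) ≠ 0) ∧ p = κ i * x i} := by
  rw [span_kx_eq_monomial] at hf ⊢
  rw [mem_ideal_span_monomial_image] at hf ⊢
  intro m hm
  obtain ⟨d, ⟨i, hi, rfl⟩, hdm⟩ := hf m hm
  refine ⟨_, ⟨i, ⟨hi, ?_⟩, rfl⟩, hdm⟩
  intro h0
  have hi0 : i = ⟨0, hn⟩ := Fin.ext h0
  subst hi0
  have h1 := Finsupp.le_def.mp hdm (Sum.inr ⟨0, hn⟩)
  rw [he m hm] at h1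
  simp [Finsupp.single_apply] at h1

/-- **Cutting a cycle commutes with elimination of a species.**
For the monomolecular, cyclic, simple, weakly reversible mass-action network on `n ≥ 4`
species, cut at the complexes `X_a` and `X_b` (0-based, `a + 1 < b ≤ n - 1`, both resulting
chains having at least 3 species), projection onto each subnetwork commutes with elimination
of the species `x_1`:
`φ_i(I_N ∩ ℚ(κ)[x_2,…,x_n]) = I_{N_i} ∩ ℚ(κ)[x_2,…,x_n]` for `i = 1, 2`
(as ideals generated by these sets). -/
theorem elimination_commutes_with_projection [NeZero n]
    (hn : 4 ≤ n) (a b : ℕ) (hab : a + 1 < b) (hbn : b ≤ n - 1)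
    (hS2 : 3 ≤ n - b + a + 1) :
    (Ideal.span ((φ1 n a b) '' ((IN n : Set (R n)) ∩ Elim n (by omega)))
      = Ideal.span ((IN1 n a b : Set (R n)) ∩ Elim n (by omega))) ∧
    (Ideal.span ((φ2 n a b) '' ((IN n : Set (R n)) ∩ Elim n (by omega)))
      = Ideal.span ((IN2 n a b : Set (R n)) ∩ Elim n (by omega))) := by
  have hn0 : 0 < n := by omega
  constructor
  · apply le_antisymm
    · -- forward inclusion for φ1
      rw [Ideal.span_le]
      rintro _ ⟨f, ⟨hfIN, hfE⟩, rfl⟩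
      apply Ideal.subset_span
      constructor
      · exact φ1_IN_le a b (Ideal.mem_map_of_mem _ hfIN)
      · rw [mem_elim_iff hn0] at hfE ⊢
        exact alghom_mem_supported _ (φ1_X_mem hn0 a b) hfE
    · rw [Ideal.span_le]
      rintro f ⟨hf1, hfE⟩
      have hf1' : f ∈ Ideal.span {p : R n |
          ∃ i : Fin n, (a ≤ (i : ℕ) ∧ (i : ℕ) < b) ∧ p = κ i * x i} := by
        have hset : {p : R n | ∃ i : Fin n, a ≤ (i : ℕ) ∧ (i : ℕ) < b ∧ p = κ i * x i}
            = {p : R n | ∃ i : Fin n, (a ≤ (i : ℕ) ∧ (i : ℕ) < b) ∧ p = κ i * x i} := by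
          ext p
          constructor
          · rintro ⟨i, h1, h2, h3⟩; exact ⟨i, ⟨h1, h2⟩, h3⟩
          · rintro ⟨i, ⟨h1, h2⟩, h3⟩; exact ⟨i, h1, h2, h3⟩
        rw [IN1, hset] at hf1
        exact hf1
      have hf2 := mono_elim_le hn0 _ hf1' hfE
      refine Ideal.span_le.mpr ?_ hf2
      rintro _ ⟨i, ⟨⟨hai, hib⟩, hi0⟩, rfl⟩
      -- κ i * x i is the image under φ1 of κ i x i - κ j x j with j = n-1
      set j : Fin n := ⟨n - 1, by omega⟩ with hj
      have hgIN : κ i * x i - κ j * x j ∈ IN n := pair_mem i j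
      have hgE : κ i * x i - κ j * x j ∈ Elim n hn0 := by
        rw [mem_elim_iff hn0]
        refine sub_mem (mul_mem ?_ ?_) (mul_mem ?_ ?_) <;>
          refine X_mem_supported.mpr ?_
        · simp
        · simp only [Set.mem_setOf_eq, ne_eq, Sum.inr.injEq]
          intro h; exact hi0 (by rw [h])
        · simp
        · simp only [Set.mem_setOf_eq, ne_eq, Sum.inr.injEq]
          intro h
          have : (j : ℕ) = 0 := by rw [h]
          simp only [hj] at this
          omega
      have hφ : φ1 n a b (κ i * x i - κ j * x j) = κ i * x i := by
        rw [map_sub, map_mul, map_mul, φ1_κ, φ1_x, φ1_κ, φ1_x,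
          if_pos ⟨hai, hib⟩, if_pos ⟨hai, le_of_lt hib⟩,
          if_neg (by simp only [hj]; omega), zero_mul, sub_zero]
      exact Ideal.subset_span ⟨_, ⟨hgIN, hgE⟩, hφ⟩
  · apply le_antisymm
    · rw [Ideal.span_le]
      rintro _ ⟨f, ⟨hfIN, hfE⟩, rfl⟩
      apply Ideal.subset_span
      constructor
      · exact φ2_IN_le a b (Ideal.mem_map_of_mem _ hfIN)
      · rw [mem_elim_iff hn0] at hfE ⊢
        exact alghom_mem_supported _ (φ2_X_mem hn0 a b) hfE
    · rw [Ideal.span_le]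
      rintro f ⟨hf1, hfE⟩
      have hf1' : f ∈ Ideal.span {p : R n |
          ∃ i : Fin n, ((i : ℕ) < a ∨ b ≤ (i : ℕ)) ∧ p = κ i * x i} := hf1
      have hf2 := mono_elim_le hn0 _ hf1' hfE
      refine Ideal.span_le.mpr ?_ hf2
      rintro _ ⟨i, ⟨hi, hi0⟩, rfl⟩
      set j : Fin n := ⟨b - 1, by omega⟩ with hj
      have hgIN : κ i * x i - κ j * x j ∈ IN n := pair_mem i j
      have hgE : κ i * x i - κ j * x j ∈ Elim n hn0 := by
        rw [mem_elim_iff hn0]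
        refine sub_mem (mul_mem ?_ ?_) (mul_mem ?_ ?_) <;>
          refine X_mem_supported.mpr ?_
        · simp
        · simp only [Set.mem_setOf_eq, ne_eq, Sum.inr.injEq]
          intro h; exact hi0 (by rw [h])
        · simp
        · simp only [Set.mem_setOf_eq, ne_eq, Sum.inr.injEq]
          intro h
          have : (j : ℕ) = 0 := by rw [h]
          simp only [hj] at this
          omega
      have hφ : φ2 n a b (κ i * x i - κ j * x j) = κ i * x i := by
        rw [map_sub, map_mul, map_mul, φ2_κ, φ2_x, φ2_κ, φ2_x,
          if_pos hi, if_pos (hi.imp le_of_lt id),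
          if_neg (by simp only [hj]; omega), zero_mul, sub_zero]
      exact Ideal.subset_span ⟨_, ⟨hgIN, hgE⟩, hφ⟩

end CyclicCRN
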